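/- Let z be a standard normal random variable and β > 0. Then: (i) (1/4)·E[e^{−β|z|}] ≤ E[g''(βz)] ≤ min{1/2, E[e^{−β|z|}]}, where g''(η) = 1/((1+e^{η})(1+e^{−η}))); and (ii) (1/β)·(1 − 1/β²)·√(2/π) ≤ E[e^{−β|z|}] ≤ (1/β)·√(2/π). -/

import Mathlib

open MeasureTheory ProbabilityTheory Real
open scoped ENNReal NNReal

/-- Second derivative of the log partition function `g(η) = ln(1 + e^η)`. -/
noncomputable def logPartition'' (η : ℝ) : ℝ :=
  1 / ((1 + Real.exp η) * (1 + Real.exp (-η)))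

lemma lp_denom_pos (η : ℝ) : 0 < (1 + Real.exp η) * (1 + Real.exp (-η)) := by positivity

lemma lp_nonneg (η : ℝ) : 0 ≤ logPartition'' η := by
  unfold logPartition''; positivity

lemma lp_le_quarter (η : ℝ) : logPartition'' η ≤ 1 / 4 := by
  unfold logPartition''
  rw [div_le_div_iff₀ (lp_denom_pos η) (by norm_num)]
  have hm : Real.exp η * Real.exp (-η) = 1 := by rw [← Real.exp_add]; simp
  nlinarith [sq_nonneg (Real.exp η - 1), Real.exp_pos η, Real.exp_pos (-η)]

lemma lp_le_exp (η : ℝ) : logPartition'' η ≤ Real.exp (-|η|) := by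
  unfold logPartition''
  rw [div_le_iff₀ (lp_denom_pos η)]
  rcases abs_cases η with ⟨h, _⟩ | ⟨h, _⟩ <;> rw [h]
  · have hm : Real.exp (-η) * Real.exp η = 1 := by rw [← Real.exp_add]; simp
    nlinarith [Real.exp_pos η, Real.exp_pos (-η)]
  · have hm : Real.exp (- -η) * Real.exp (-η) = 1 := by rw [← Real.exp_add]; simp
    nlinarith [Real.exp_pos η, Real.exp_pos (-η), Real.exp_pos (- -η)]

lemma lp_ge (η : ℝ) : Real.exp (-|η|) / 4 ≤ logPartition'' η := by
  unfold logPartition''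
  rw [div_le_div_iff₀ (by norm_num) (lp_denom_pos η)]
  have h1 : Real.exp η ≤ Real.exp |η| := Real.exp_le_exp.2 (le_abs_self η)
  have h2 : Real.exp (-η) ≤ Real.exp |η| := Real.exp_le_exp.2 (neg_le_abs η)
  have h3 : (1:ℝ) ≤ Real.exp |η| := by
    rw [← Real.exp_zero]; exact Real.exp_le_exp.2 (abs_nonneg η)
  have hm : Real.exp (-|η|) * Real.exp |η| = 1 := by rw [← Real.exp_add]; simp
  have hm2 : Real.exp η * Real.exp (-η) = 1 := by rw [← Real.exp_add]; simp
  nlinarith [Real.exp_pos (-|η|), Real.exp_pos η, Real.exp_pos (-η)]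

lemma lp_continuous : Continuous logPartition'' := by
  unfold logPartition''
  exact continuous_const.div (by continuity) (fun x => (lp_denom_pos x).ne')

lemma gauss_int (g : ℝ → ℝ) :
    ∫ z, g z ∂(gaussianReal 0 1)
      = ∫ x, (Real.sqrt (2 * π))⁻¹ * Real.exp (-x ^ 2 / 2) * g x := by
  rw [gaussianReal_of_var_ne_zero 0 one_ne_zero]
  have hpdf : gaussianPDF 0 1 = fun x => ((gaussianPDFReal 0 1 x).toNNReal : ℝ≥0∞) := rfl
  rw [hpdf, integral_withDensity_eq_integral_smul
    ((measurable_gaussianPDFReal 0 1).real_toNNReal) g]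
  refine integral_congr_ae (ae_of_all _ fun x => ?_)
  show (gaussianPDFReal 0 1 x).toNNReal • g x = _
  rw [NNReal.smul_def, Real.coe_toNNReal _ (gaussianPDFReal_nonneg 0 1 x)]
  simp only [gaussianPDFReal, NNReal.coe_one, mul_one, sub_zero, smul_eq_mul]

/-- Gaussian integral bounds (Lemma 13): for `z ~ N(0,1)` and `β > 0`,
(i) `(1/4)E[e^{-β|z|}] ≤ E[g''(βz)] ≤ min{1/2, E[e^{-β|z|}]}` and
(ii) `(1/β)(1 - 1/β²)√(2/π) ≤ E[e^{-β|z|}] ≤ (1/β)√(2/π)`. -/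
theorem stmt13 (β : ℝ) (hβ : 0 < β) :
    ((1 / 4) * ∫ z, Real.exp (-β * |z|) ∂(gaussianReal 0 1)
        ≤ ∫ z, logPartition'' (β * z) ∂(gaussianReal 0 1)
      ∧ ∫ z, logPartition'' (β * z) ∂(gaussianReal 0 1)
        ≤ min (1 / 2) (∫ z, Real.exp (-β * |z|) ∂(gaussianReal 0 1)))
    ∧ ((1 / β) * (1 - 1 / β ^ 2) * Real.sqrt (2 / π)
        ≤ ∫ z, Real.exp (-β * |z|) ∂(gaussianReal 0 1)
      ∧ ∫ z, Real.exp (-β * |z|) ∂(gaussianReal 0 1) ≤ (1 / β) * Real.sqrt (2 / π)) := by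
  have habs : ∀ z : ℝ, -β * |z| = -|β * z| := by
    intro z; rw [abs_mul, abs_of_pos hβ]; ring
  -- integrability over the Gaussian measure
  have hIexp : Integrable (fun z => Real.exp (-β * |z|)) (gaussianReal 0 1) := by
    refine Integrable.mono' (integrable_const 1)
      (Continuous.aestronglyMeasurable (by continuity)) (ae_of_all _ fun z => ?_)
    rw [Real.norm_eq_abs, abs_of_nonneg (Real.exp_pos _).le]
    exact Real.exp_le_one_iff.2 (by nlinarith [abs_nonneg z])
  have hIlp : Integrable (fun z => logPartition'' (β * z)) (gaussianReal 0 1) := by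
    refine Integrable.mono' (integrable_const (1/4 : ℝ))
      (Continuous.aestronglyMeasurable (lp_continuous.comp (by continuity)))
      (ae_of_all _ fun z => ?_)
    rw [Real.norm_eq_abs, abs_of_nonneg (lp_nonneg _)]
    exact lp_le_quarter _
  constructor
  · constructor
    · rw [← MeasureTheory.integral_const_mul]
      refine integral_mono (hIexp.const_mul _) hIlp fun z => ?_
      have := lp_ge (β * z)
      rw [← habs z] at this
      linarith
    · refine le_min ?_ ?_
      · calc ∫ z, logPartition'' (β * z) ∂(gaussianReal 0 1)
            ≤ ∫ _, (1/4 : ℝ) ∂(gaussianReal 0 1) :=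
              integral_mono hIlp (integrable_const _) fun z => lp_le_quarter _
          _ = 1/4 := by simp
          _ ≤ 1/2 := by norm_num
      · refine integral_mono hIlp hIexp fun z => ?_
        have := lp_le_exp (β * z)
        rw [← habs z] at this
        exact this
  -- Part (ii)
  · set c : ℝ := (Real.sqrt (2 * π))⁻¹ with hc_def
    have hcpos : 0 < c := by rw [hc_def]; positivity
    -- set-integral computations
    have hint1 : IntegrableOn (fun x => Real.exp (-(β * x))) (Set.Ioi (0:ℝ)) := by
      simpa [neg_mul] using exp_neg_integrableOn_Ioi 0 hβ
    have hint2 : IntegrableOn (fun x => x ^ 2 * Real.exp (-(β * x))) (Set.Ioi (0:ℝ)) := by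
      refine (integrableOn_rpow_mul_exp_neg_mul_rpow (s := 2) (p := 1)
        (by norm_num) one_pos hβ).congr_fun (fun x hx => ?_) measurableSet_Ioi
      dsimp only
      rw [Real.rpow_one, Real.rpow_two, neg_mul]
    have hint3 : IntegrableOn (fun x => Real.exp (-x^2/2) * Real.exp (-(β * x)))
        (Set.Ioi (0:ℝ)) := by
      refine Integrable.mono' hint1 (Continuous.aestronglyMeasurable (by continuity))
        (ae_of_all _ fun x => ?_)
      rw [Real.norm_eq_abs, abs_of_nonneg (by positivity)]
      exact mul_le_of_le_one_left (Real.exp_pos _).le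
        (Real.exp_le_one_iff.2 (by nlinarith [sq_nonneg x]))
    have hJ1 : ∫ x in Set.Ioi (0:ℝ), Real.exp (-(β * x)) = 1 / β := by
      have h := Real.integral_rpow_mul_exp_neg_mul_Ioi (a := 1) (r := β) one_pos hβ
      rw [Real.Gamma_one, Real.rpow_one, mul_one] at h
      rw [← h]
      refine setIntegral_congr_fun measurableSet_Ioi fun x hx => ?_
      rw [show (1:ℝ) - 1 = 0 by norm_num, Real.rpow_zero, one_mul]
    have hJ2 : ∫ x in Set.Ioi (0:ℝ), x ^ 2 * Real.exp (-(β * x)) = 2 / β ^ 3 := by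
      have h := Real.integral_rpow_mul_exp_neg_mul_Ioi (a := 3) (r := β) (by norm_num) hβ
      have hg3 : Real.Gamma 3 = 2 := by
        rw [show (3:ℝ) = ((2:ℕ):ℝ) + 1 by norm_num, Real.Gamma_nat_eq_factorial]
        norm_num
      rw [hg3] at h
      have heq : ∫ t in Set.Ioi (0:ℝ), t ^ ((3:ℝ) - 1) * Real.exp (-(β * t))
          = ∫ x in Set.Ioi (0:ℝ), x ^ 2 * Real.exp (-(β * x)) := by
        refine setIntegral_congr_fun measurableSet_Ioi fun x hx => ?_
        rw [show (3:ℝ) - 1 = ((2:ℕ):ℝ) by norm_num, Real.rpow_natCast]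
      rw [heq] at h
      rw [h, show (3:ℝ) = ((3:ℕ):ℝ) by norm_num, Real.rpow_natCast, div_pow, one_pow]
      ring
    have hintlow : IntegrableOn
        (fun x => Real.exp (-(β * x)) - (1/2) * (x ^ 2 * Real.exp (-(β * x))))
        (Set.Ioi (0:ℝ)) := hint1.sub (hint2.const_mul _)
    have hJlow : ∫ x in Set.Ioi (0:ℝ),
        (Real.exp (-(β * x)) - (1/2) * (x ^ 2 * Real.exp (-(β * x))))
        = 1 / β - 1 / β ^ 3 := by
      rw [integral_sub hint1 (hint2.const_mul _), MeasureTheory.integral_const_mul, hJ1, hJ2]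
      field_simp
    set J := ∫ x in Set.Ioi (0:ℝ), Real.exp (-x^2/2) * Real.exp (-(β * x)) with hJ_def
    have hJup : J ≤ 1 / β := by
      rw [← hJ1]
      refine setIntegral_mono_on hint3 hint1 measurableSet_Ioi fun x hx => ?_
      exact mul_le_of_le_one_left (Real.exp_pos _).le
        (Real.exp_le_one_iff.2 (by nlinarith [sq_nonneg x]))
    have hJlo : 1 / β - 1 / β ^ 3 ≤ J := by
      rw [← hJlow]
      refine setIntegral_mono_on hintlow hint3 measurableSet_Ioi fun x hx => ?_
      have h1 : 1 - x^2/2 ≤ Real.exp (-x^2/2) := by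
        have := Real.add_one_le_exp (-x^2/2); linarith
      have h2 := mul_le_mul_of_nonneg_right h1 (Real.exp_pos (-(β * x))).le
      nlinarith
    have hI : ∫ z, Real.exp (-β * |z|) ∂(gaussianReal 0 1) = 2 * c * J := by
      rw [gauss_int]
      have heq : (fun x : ℝ =>
            (Real.sqrt (2*π))⁻¹ * Real.exp (-x ^ 2 / 2) * Real.exp (-β * |x|))
          = fun x : ℝ =>
            (fun t : ℝ => c * (Real.exp (-t ^ 2 / 2) * Real.exp (-(β * t)))) |x| := by
        funext x
        simp only [hc_def, sq_abs]
        ring_nf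
      rw [heq,
        integral_comp_abs (f := fun t : ℝ => c * (Real.exp (-t ^ 2 / 2) * Real.exp (-(β * t)))),
        MeasureTheory.integral_const_mul, hJ_def]
      ring
    have hc2 : 2 * c = Real.sqrt (2 / π) := by
      rw [hc_def]
      have hπ : 0 < π := Real.pi_pos
      have h4 : Real.sqrt (2/π) * Real.sqrt (2*π) = 2 := by
        rw [← Real.sqrt_mul (by positivity)]
        rw [show (2/π) * (2*π) = 2^2 by field_simp]
        exact Real.sqrt_sq (by norm_num)
      have hs : 0 < Real.sqrt (2*π) := Real.sqrt_pos.2 (by positivity)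
      have h5 : Real.sqrt (2/π) = 2 / Real.sqrt (2*π) := by
        rw [eq_div_iff hs.ne']; exact h4
      rw [h5, div_eq_mul_inv]
    have hc2' : (0:ℝ) ≤ 2 * c := by nlinarith
    rw [hI]
    constructor
    · calc (1/β) * (1 - 1/β^2) * Real.sqrt (2/π) = (2*c) * (1/β - 1/β^3) := by
            rw [hc2]; field_simp
        _ ≤ 2 * c * J := mul_le_mul_of_nonneg_left hJlo hc2'
    · calc 2 * c * J ≤ (2*c) * (1/β) := mul_le_mul_of_nonneg_left hJup hc2'
        _ = (1/β) * Real.sqrt (2/π) := by rw [hc2]; ring
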